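/- arXiv:2306.15743 — 2 statements merged into one kernel-verified Lean document; each statement's English description precedes it below -/
import Mathlib

section
/- Every strongly connected finite tournament on at least 3 vertices contains a Hamiltonian cycle (Moon's theorem, the special case used for ordering transactions within a Condorcet cycle/strongly connected component). -/
open List

section Moon

variable {V : Type*} {r : V → V → Prop}

private lemma tflip (htourn : ∀ u v : V, u ≠ v → Xor' (r u v) (r v u))
    {x y : V} (hxy : x ≠ y) (h : ¬ r x y) : r y x := by
  rcases htourn x y hxy with ⟨h1, _⟩ | ⟨h1, _⟩
  · exact absurd h1 h
  · exact h1

private lemma tirr (htourn : ∀ u v : V, u ≠ v → Xor' (r u v) (r v u))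
    {x y : V} (hxy : x ≠ y) (h : r x y) : ¬ r y x := by
  rcases htourn x y hxy with ⟨_, h2⟩ | ⟨h1, h2⟩
  · exact h2
  · exact absurd h h2

/-- From a walk leaving a set, extract a crossing edge. -/
private lemma exitLem {S : V → Prop} :
    ∀ {u v : V}, Relation.ReflTransGen r u v → S u → ¬ S v →
      ∃ a b, S a ∧ ¬ S b ∧ r a b := by
  intro u v h
  induction h using Relation.ReflTransGen.head_induction_on with
  | refl => intro hu hv; exact absurd hu hv
  | @head a c h' hrt ih =>
    intro hu hv
    by_cases hc : S c
    · exact ih hc hv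
    · exact ⟨a, c, hu, hc, h'⟩

/-- Simple-path extraction. -/
private lemma pathLem :
    ∀ {u v : V}, Relation.ReflTransGen r u v →
      u = v ∨ ∃ m, List.Chain r u (m ++ [v]) ∧ (u :: (m ++ [v])).Nodup := by
  intro u v h
  induction h using Relation.ReflTransGen.head_induction_on with
  | refl => exact Or.inl rfl
  | @head a c h' hrt ih =>
    by_cases hav : a = v
    · exact Or.inl hav
    right
    rcases ih with rfl | ⟨m, hm, hnd⟩
    · exact ⟨[], by simpa [List.Chain] using h', by simp [hav]⟩
    · by_cases hmem : a ∈ c :: (m ++ [v])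
      · rcases (mem_cons).1 hmem with rfl | hmem'
        · exact ⟨m, hm, hnd⟩
        · rcases mem_append.1 hmem' with hmem'' | hmem''
          · rcases List.append_of_mem hmem'' with ⟨m₁, m₂, rfl⟩
            rw [append_assoc, cons_append] at hm
            simp only [List.Chain] at hm; rw [List.isChain_cons_split] at hm
            refine ⟨m₂, hm.2, ?_⟩
            have hsub : (a :: (m₂ ++ [v])) <+ (c :: (m₁ ++ a :: (m₂ ++ [v]))) :=
              (List.sublist_append_right m₁ _).cons c
            refine hsub.nodup ?_
            simpa [append_assoc] using hnd
          · simp at hmem''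
            exact absurd hmem'' hav
      · exact ⟨c :: m, List.IsChain.cons_cons h' hm, by simp_all⟩

end Moon

section Moon2
variable {V : Type*} {r : V → V → Prop}

/-- Insert a vertex between an adjacent pair in a chain. -/
private lemma chainInsert {p q v : V} (hpv : r p v) (hvq : r v q) :
    ∀ (L₁ L₂ : List V), Chain' r (L₁ ++ p :: q :: L₂) → Chain' r (L₁ ++ p :: v :: q :: L₂) := by
  intro L₁ L₂ h
  simp only [List.Chain'] at h ⊢; rw [List.isChain_split (l₁ := L₁) (c := p) (l₂ := q :: L₂)] at h
  rw [List.isChain_split (l₁ := L₁) (c := p) (l₂ := v :: q :: L₂)]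
  refine ⟨h.1, ?_⟩
  have h2 := h.2
  rw [List.isChain_cons_cons] at h2
  exact List.isChain_cons_cons.2 ⟨hpv, List.isChain_cons_cons.2 ⟨hvq, h2.2⟩⟩

/-- Find an adjacent pair (p,q) with r p v and r v q along a chain, given the head beats v
and some later vertex is beaten by v. -/
private lemma findPair (htourn : ∀ u v : V, u ≠ v → Xor' (r u v) (r v u)) {v : V} :
    ∀ (m : List V) (c : V), List.Chain r c m → r c v → (∀ x ∈ c :: m, x ≠ v) →
      (∃ y ∈ m, r v y) →
      ∃ l₁ p q l₂, c :: m = l₁ ++ p :: q :: l₂ ∧ r p v ∧ r v q := by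
  intro m
  induction m with
  | nil => rintro c - - - ⟨y, hy, -⟩; simp at hy
  | cons d m' ih =>
    rintro c hch hcv hne ⟨y, hy, hvy⟩
    simp only [List.Chain] at hch; rw [List.isChain_cons_cons] at hch
    by_cases hvd : r v d
    · exact ⟨[], c, d, m', by simp, hcv, hvd⟩
    · have hdv : r d v := tflip htourn (hne d (by simp)).symm hvd
      have hy' : y ∈ m' := by
        rcases mem_cons.1 hy with rfl | h
        · exact absurd hvy hvd
        · exact h
      obtain ⟨l₁, p, q, l₂, heq, hpv, hvq⟩ :=
        ih d hch.2 hdv (fun x hx => hne x (mem_cons_of_mem c hx)) ⟨y, hy', hvy⟩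
      exact ⟨c :: l₁, p, q, l₂, by rw [cons_append, heq], hpv, hvq⟩

/-- Rotations of a cycle are cycles. -/
private lemma rotCyc {a x : V} {t : List V} (h : List.Chain r a (t ++ [a])) (hx : x ∈ a :: t) :
    ∃ s, List.Chain r x (s ++ [x]) ∧ (x :: s) ~ (a :: t) := by
  rcases mem_cons.1 hx with rfl | hx'
  · exact ⟨t, h, List.Perm.refl _⟩
  · rcases List.append_of_mem hx' with ⟨t₁, t₂, rfl⟩
    refine ⟨t₂ ++ a :: t₁, ?_, ?_⟩
    · have h' : Chain r a (t₁ ++ x :: (t₂ ++ [a])) := by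
        simpa [append_assoc] using h
      simp only [List.Chain] at h'; rw [List.isChain_cons_split] at h'
      have goal : Chain r x (t₂ ++ a :: (t₁ ++ [x])) := List.isChain_cons_split.2 ⟨h'.2, h'.1⟩
      simpa [append_assoc] using goal
    · calc x :: (t₂ ++ a :: t₁) = (x :: t₂) ++ (a :: t₁) := by simp
        _ ~ (a :: t₁) ++ (x :: t₂) := List.perm_append_comm
        _ = a :: (t₁ ++ x :: t₂) := by simp

end Moon2

section Moon3
variable {V : Type*} {r : V → V → Prop}

/-- Case A of the extension step: if some vertex of the cycle beats `v` and `v` beats some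
vertex of the cycle, then `v` can be inserted. -/
private lemma insertOne (htourn : ∀ u v : V, u ≠ v → Xor' (r u v) (r v u))
    {a v x y : V} {t : List V}
    (hch : List.Chain r a (t ++ [a])) (hv : v ∉ a :: t)
    (hx : x ∈ a :: t) (hxv : r x v) (hy : y ∈ a :: t) (hvy : r v y) :
    ∃ b s, List.Chain r b (s ++ [b]) ∧ (b :: s) ~ v :: (a :: t) := by
  obtain ⟨s, hsch, hperm⟩ := rotCyc hch hx
  have hne : ∀ z ∈ x :: (s ++ [x]), z ≠ v := by
    intro z hz
    have hz' : z ∈ x :: s := by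
      rcases mem_cons.1 hz with rfl | hz2
      · exact mem_cons_self
      · rcases mem_append.1 hz2 with h | h
        · exact mem_cons_of_mem _ h
        · simp at h; simp [h]
    have : z ∈ a :: t := hperm.mem_iff.1 hz'
    rintro rfl; exact hv this
  have hxney : x ≠ v := hne x (by simp)
  have hys : y ∈ s ++ [x] := by
    have hy' : y ∈ x :: s := hperm.mem_iff.2 hy
    rcases mem_cons.1 hy' with rfl | h
    · exact absurd hvy (tirr htourn hxney hxv)
    · exact mem_append.2 (Or.inl h)
  obtain ⟨l₁, p, q, l₂, heq, hpv, hvq⟩ :=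
    findPair htourn (s ++ [x]) x hsch hxv hne ⟨y, hys, hvy⟩
  have heq' : (x :: s) ++ [x] = l₁ ++ p :: q :: l₂ := by simpa using heq
  have hchain' : Chain' r ((x :: s) ++ [x]) := by
    show Chain' r (x :: (s ++ [x]))
    exact hsch
  rcases l₂.eq_nil_or_concat with rfl | ⟨l₂', e, rfl⟩
  · -- seam case : q = x, x :: s = l₁ ++ [p]
    have h2 : (x :: s) ++ [x] = (l₁ ++ [p]) ++ [q] := by simpa using heq'
    obtain ⟨h3, h4⟩ := List.append_inj' h2 (by simp)
    have h4' : x = q := by simpa using h4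
    refine ⟨x, s ++ [v], ?_, ?_⟩
    · show Chain' r (x :: ((s ++ [v]) ++ [x]))
      have base : Chain' r (l₁ ++ p :: q :: []) := by
        rw [show l₁ ++ [p, q] = (l₁ ++ [p]) ++ [q] by simp, ← h3, ← h4']
        exact hchain'
      have ins := chainInsert hpv hvq l₁ [] base
      have e1 : x :: ((s ++ [v]) ++ [x]) = l₁ ++ p :: v :: q :: [] := by
        rw [show l₁ ++ [p, v, q] = (l₁ ++ [p]) ++ [v, q] by simp, ← h3, ← h4']
        simp
      rw [e1]
      exact ins
    · calc x :: (s ++ [v]) = (x :: s) ++ v :: [] := by simp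
        _ ~ v :: ((x :: s) ++ []) := List.perm_middle
        _ = v :: (x :: s) := by simp
        _ ~ v :: (a :: t) := hperm.cons v
  · -- pair inside the list
    have h2 : (x :: s) ++ [x] = (l₁ ++ p :: q :: l₂') ++ [e] := by rw [heq']; simp
    obtain ⟨h3, h4⟩ := List.append_inj' h2 (by simp)
    cases l₁ with
    | nil =>
      simp only [nil_append] at h3
      obtain ⟨rfl, rfl⟩ : x = p ∧ s = q :: l₂' := by
        constructor <;> [exact (List.cons.injEq _ _ _ _ ▸ h3).1 ; skip]
        exact (List.cons.injEq _ _ _ _ ▸ h3).2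
      refine ⟨x, v :: q :: l₂', ?_, ?_⟩
      · show Chain' r (x :: ((v :: q :: l₂') ++ [x]))
        have base : Chain' r ([] ++ x :: q :: (l₂' ++ [x])) := by
          simpa using hchain'
        have ins := chainInsert hpv hvq [] (l₂' ++ [x]) base
        simpa using ins
      · calc x :: (v :: q :: l₂') ~ v :: (x :: q :: l₂') := List.Perm.swap v x _
          _ ~ v :: (a :: t) := hperm.cons v
    | cons w l₁' =>
      obtain ⟨rfl, hs⟩ : x = w ∧ s = l₁' ++ p :: q :: l₂' := by
        constructor <;> [exact (List.cons.injEq _ _ _ _ ▸ h3).1 ; skip]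
        exact (List.cons.injEq _ _ _ _ ▸ h3).2
      refine ⟨x, l₁' ++ p :: v :: q :: l₂', ?_, ?_⟩
      · show Chain' r (x :: ((l₁' ++ p :: v :: q :: l₂') ++ [x]))
        have base : Chain' r ((x :: l₁') ++ p :: q :: (l₂' ++ [x])) := by
          rw [hs] at hchain'
          simpa [append_assoc] using hchain'
        have ins := chainInsert hpv hvq (x :: l₁') (l₂' ++ [x]) base
        simpa [append_assoc] using ins
      · calc x :: (l₁' ++ p :: v :: q :: l₂')
            = ((x :: l₁') ++ [p]) ++ v :: (q :: l₂') := by simp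
          _ ~ v :: (((x :: l₁') ++ [p]) ++ q :: l₂') := List.perm_middle
          _ = v :: (x :: s) := by simp [hs]
          _ ~ v :: (a :: t) := hperm.cons v

end Moon3

section Moon4
variable {V : Type*} {r : V → V → Prop}

/-- Case B of the extension step: if every outside vertex either beats the whole cycle or is
beaten by the whole cycle, we can insert two outside vertices at the seam. -/
private lemma extendTwo (htourn : ∀ u v : V, u ≠ v → Xor' (r u v) (r v u))
    (hsc : ∀ u v : V, Relation.ReflTransGen r u v) {a : V} {t : List V}
    (hch : List.Chain r a (t ++ [a]))
    (hsplit : ∀ v, v ∉ a :: t → (∀ x ∈ a :: t, r x v) ∨ (∀ x ∈ a :: t, r v x))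
    (hout : ∃ v, v ∉ a :: t) :
    ∃ w z, w ∉ a :: t ∧ z ∉ a :: t ∧ w ≠ z ∧
      List.Chain r a ((t ++ [w, z]) ++ [a]) := by
  obtain ⟨v0, hv0⟩ := hout
  have hane : ∀ {u : V}, u ∉ a :: t → a ≠ u := by
    intro u hu h; subst h; exact hu (by simp)
  by_cases hW : ∃ w, w ∉ a :: t ∧ ∀ x ∈ a :: t, r x w
  · by_cases hZ : ∃ z, z ∉ a :: t ∧ ∀ x ∈ a :: t, r z x
    · obtain ⟨w₀, hw₀m, hw₀⟩ := hW
      obtain ⟨z₀, hz₀m, hz₀⟩ := hZ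
      -- exit from cycle ∪ W into Z
      have hSw : (fun u => u ∈ a :: t ∨ (u ∉ a :: t ∧ ∀ x ∈ a :: t, r x u)) w₀ :=
        Or.inr ⟨hw₀m, hw₀⟩
      have hSz : ¬ (fun u => u ∈ a :: t ∨ (u ∉ a :: t ∧ ∀ x ∈ a :: t, r x u)) z₀ := by
        rintro (h | ⟨-, h⟩)
        · exact hz₀m h
        · exact tirr htourn (hane hz₀m) (h a (by simp)) (hz₀ a (by simp))
      obtain ⟨c, d, hc, hd, hcd⟩ :=
        exitLem (S := fun u => u ∈ a :: t ∨ (u ∉ a :: t ∧ ∀ x ∈ a :: t, r x u))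
          (hsc w₀ z₀) hSw hSz
      have hd1 : d ∉ a :: t := fun h => hd (Or.inl h)
      have hdZ : ∀ x ∈ a :: t, r d x := by
        rcases hsplit d hd1 with h | h
        · exact absurd (Or.inr ⟨hd1, h⟩) hd
        · exact h
      have hcW : c ∉ a :: t ∧ ∀ x ∈ a :: t, r x c := by
        rcases hc with h | h
        · exact absurd hcd (tirr htourn (fun hcd' => hd1 (by rw [hcd']; exact h)) (hdZ c h))
        · exact h
      have hwz : c ≠ d := by
        rintro rfl
        exact tirr htourn (hane hcW.1) (hcW.2 a (by simp)) (hdZ a (by simp))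
      refine ⟨c, d, hcW.1, hd1, hwz, ?_⟩
      have h1 : Chain' r ((a :: t) ++ [a]) := hch
      simp only [List.Chain'] at h1; rw [List.isChain_append] at h1
      have goal : Chain' r ((a :: t) ++ [c, d, a]) := by
        simp only [List.Chain']; rw [List.isChain_append]
        refine ⟨h1.1, ?_, ?_⟩
        · exact List.isChain_cons_cons.2 ⟨hcd, List.isChain_cons_cons.2 ⟨hdZ a (by simp), by simp⟩⟩
        · intro x hx y hy
          simp only [head?_cons, Option.mem_some_iff] at hy
          subst hy
          exact hcW.2 x (by
            have := List.mem_of_mem_getLast? hx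
            exact this)
      show Chain' r (a :: ((t ++ [c, d]) ++ [a]))
      have e : a :: ((t ++ [c, d]) ++ [a]) = (a :: t) ++ [c, d, a] := by simp
      rw [e]; exact goal
    · -- Z empty : contradiction
      exfalso
      obtain ⟨w₀, hw₀m, hw₀⟩ := hW
      obtain ⟨c, d, hc, hd, hcd⟩ :=
        exitLem (S := fun u => u ∉ a :: t) (hsc w₀ a) hw₀m (by simp)
      push_neg at hd
      rcases hsplit c hc with h | h
      · exact tirr htourn (fun h' => hc (by rw [h']; exact hd)) hcd (h d hd)
      · exact hZ ⟨c, hc, h⟩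
  · -- W empty : contradiction
    exfalso
    obtain ⟨c, d, hc, hd, hcd⟩ :=
      exitLem (S := fun u => u ∈ a :: t) (hsc a v0) (by simp) hv0
    rcases hsplit d hd with h | h
    · exact hW ⟨d, hd, h⟩
    · exact tirr htourn (fun h' => hd (by rw [← h']; exact hc)) hcd (h c hc)

end Moon4

section Moon5
variable {V : Type*} {r : V → V → Prop}

private lemma grow [Fintype V] (htourn : ∀ u v : V, u ≠ v → Xor' (r u v) (r v u))
    (hsc : ∀ u v : V, Relation.ReflTransGen r u v) :
    ∀ (n : ℕ) (a : V) (t : List V), Fintype.card V - (a :: t).length ≤ n →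
      (a :: t).Nodup → List.Chain r a (t ++ [a]) →
      ∃ b s, (b :: s).Nodup ∧ (∀ v : V, v ∈ b :: s) ∧ List.Chain r b (s ++ [b]) := by
  intro n
  induction n with
  | zero =>
    intro a t hlen hnd hch
    classical
    refine ⟨a, t, hnd, ?_, hch⟩
    have hcard : Fintype.card V ≤ (a :: t).length := by omega
    have htf : (a :: t).toFinset.card = (a :: t).length := List.toFinset_card_of_nodup hnd
    have huniv : (a :: t).toFinset = Finset.univ :=
      Finset.eq_univ_of_card _ (le_antisymm (Finset.card_le_univ _) (htf ▸ hcard))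
    intro v
    have : v ∈ (a :: t).toFinset := huniv ▸ Finset.mem_univ v
    exact List.mem_toFinset.1 this
  | succ n ih =>
    intro a t hlen hnd hch
    by_cases hall : ∀ v : V, v ∈ a :: t
    · exact ⟨a, t, hnd, hall, hch⟩
    · push_neg at hall
      obtain ⟨v, hv⟩ := hall
      by_cases hins : ∃ v', v' ∉ a :: t ∧ (∃ x ∈ a :: t, r x v') ∧ (∃ y ∈ a :: t, r v' y)
      · obtain ⟨v', hv', ⟨x, hx, hxv⟩, ⟨y, hy, hvy⟩⟩ := hins
        obtain ⟨b, s, hbs, hperm⟩ := insertOne htourn hch hv' hx hxv hy hvy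
        have hnd' : (b :: s).Nodup := hperm.nodup_iff.2 (by simp [hnd, hv'])
        have hlen' : (b :: s).length = (a :: t).length + 1 := by
          simpa using hperm.length_eq
        cases s with
        | nil => simp at hlen'
        | cons b' s' =>
          refine ih b (b' :: s') ?_ hnd' hbs
          have := hperm.length_eq
          simp only [length_cons] at this hlen ⊢
          omega
      · push_neg at hins
        have hsplit : ∀ u, u ∉ a :: t → (∀ x ∈ a :: t, r x u) ∨ (∀ x ∈ a :: t, r u x) := by
          intro u hu
          have hune : ∀ x ∈ a :: t, x ≠ u := by
            rintro x hx rfl; exact hu hx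
          by_cases hcase : ∃ x ∈ a :: t, r x u
          · left
            have h2 := hins u hu hcase
            intro x hx
            exact tflip htourn (hune x hx).symm (h2 x hx)
          · right
            push_neg at hcase
            intro x hx
            exact tflip htourn (hune x hx) (hcase x hx)
        obtain ⟨w, z, hw, hz, hwz, hch'⟩ := extendTwo htourn hsc hch hsplit ⟨v, hv⟩
        have hnd' : (a :: (t ++ [w, z])).Nodup := by
          have e : a :: (t ++ [w, z]) = (a :: t) ++ [w, z] := by simp
          rw [e]
          refine List.Nodup.append hnd (by simp [hwz]) ?_
          intro x hx
          simp only [mem_cons, not_mem_nil, or_false, not_or]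
          rintro (rfl | rfl)
          · exact hw hx
          · exact hz hx
        refine ih a (t ++ [w, z]) ?_ hnd' hch'
        simp only [length_cons, length_append, length_cons, length_nil] at hlen ⊢
        omega

end Moon5

/-- Moon's theorem: every strongly connected tournament on at least 3 vertices
has a Hamiltonian cycle. -/
theorem stmt_1 {V : Type*} [Fintype V] (r : V → V → Prop)
    (htourn : ∀ u v : V, u ≠ v → Xor' (r u v) (r v u))
    (hsc : ∀ u v : V, Relation.ReflTransGen r u v)
    (hcard : 3 ≤ Fintype.card V) :
    ∃ l : List V, l.Nodup ∧ (∀ v : V, v ∈ l) ∧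
      List.Chain' r (l ++ l.take 1) := by
  obtain ⟨x, y, hxy⟩ := Fintype.exists_pair_of_one_lt_card (α := V) (by omega)
  -- get an edge u → w with u ≠ w
  obtain ⟨u, w, huw, hr⟩ : ∃ u w : V, u ≠ w ∧ r u w := by
    rcases htourn x y hxy with ⟨h, -⟩ | ⟨h, -⟩
    · exact ⟨x, y, hxy, h⟩
    · exact ⟨y, x, hxy.symm, h⟩
  rcases pathLem (hsc w u) with h | ⟨m, hm, hnd⟩
  · exact absurd h.symm huw
  · have hch : List.Chain r u ((w :: m) ++ [u]) := by
      simp only [List.Chain]; rw [cons_append, List.isChain_cons_cons]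
      exact ⟨hr, hm⟩
    have hnd' : (u :: w :: m).Nodup := by
      have hnd2 : ((w :: m) ++ [u]).Nodup := by simpa using hnd
      rw [List.nodup_append] at hnd2
      refine List.nodup_cons.2 ⟨?_, hnd2.1⟩
      intro hmem
      exact hnd2.2.2 u hmem u (by simp) rfl
    obtain ⟨b, s, hbs, hball, hbch⟩ :=
      grow htourn hsc (Fintype.card V) u (w :: m) (by omega) hnd' hch
    refine ⟨b :: s, hbs, hball, ?_⟩
    show Chain' r ((b :: s) ++ [b])
    show Chain' r (b :: (s ++ [b]))
    exact hbch
end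

section
/- If all n voters report the same relative order on a subset S of alternatives (voter-unanimity on S), then the ranked pairs procedure applied to the weighted majority graph outputs an ordering that agrees with this common order on S. Formally: every edge between elements of S consistent with the common order has weight n, the set of weight-n edges forms an acyclic subgraph, and ranked pairs processes all weight-n edges before any edge of weight less than n, so the transitive closure fixed by these edges orders S according to the common order. -/
open scoped Classical

/-- One step of the ranked pairs procedure: accept the edge `e = (u,v)`
(adding `u ≺ v`) unless `v` already precedes `u` in the transitive closure of
the previously accepted edges. -/
noncomputable def rpStep {A : Type*} (R : A → A → Prop) (e : A × A) :
    A → A → Prop :=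
  if Relation.TransGen R e.2 e.1 then R
  else fun a b => R a b ∨ (a = e.1 ∧ b = e.2)

/-- The set of edges accepted by ranked pairs after processing the edge list
`l` (in order). -/
noncomputable def rpAccepted {A : Type*} (l : List (A × A)) : A → A → Prop :=
  l.foldl rpStep (fun _ _ => False)

/-- The number of voters ranking `u` before `v`. -/
noncomputable def voteWeight {A : Type*} {n : ℕ} (votes : Fin n → A → A → Prop)
    (u v : A) : ℕ :=
  Nat.card {i : Fin n // votes i u v}

private lemma natcard_fin (n : ℕ) : Nat.card (Fin n) = n := by
  simp [Nat.card_eq_fintype_card]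

private lemma rpStep_le {A : Type*} (R : A → A → Prop) (e : A × A) :
    ∀ a b, R a b → rpStep R e a b := by
  intro a b h
  unfold rpStep
  split
  · exact h
  · exact Or.inl h

private lemma foldl_rpStep_le {A : Type*} :
    ∀ (l : List (A × A)) (R : A → A → Prop) (a b : A), R a b →
      (l.foldl rpStep R) a b := by
  intro l
  induction l with
  | nil => intro R a b h; exact h
  | cons e t ih => intro R a b h; exact ih _ a b (rpStep_le R e a b h)

private lemma foldl_rpStep_accepts {A : Type*} {n : ℕ}
    (votes : Fin n → A → A → Prop) (i0 : Fin n)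
    (htr : Transitive (votes i0)) (hirr : ∀ x, ¬ votes i0 x x)
    (hR0 : ∀ a b : A, voteWeight votes a b = n → votes i0 a b)
    (hle : ∀ a b : A, voteWeight votes a b ≤ n) :
    ∀ (l : List (A × A)) (R : A → A → Prop),
      (∀ a b, R a b → voteWeight votes a b = n) →
      l.Pairwise (fun e e' => voteWeight votes e'.1 e'.2 ≤ voteWeight votes e.1 e.2) →
      ∀ u v, (u, v) ∈ l → voteWeight votes u v = n → (l.foldl rpStep R) u v := by
  intro l
  induction l with
  | nil => intro R _ _ u v h; simp at h
  | cons e t ih =>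
    intro R hRsub hs u v hmem huv
    obtain ⟨hhead, hst⟩ := List.pairwise_cons.mp hs
    have hnoblock : ∀ a b : A, voteWeight votes a b = n →
        ¬ Relation.TransGen R b a := by
      intro a b hab hT
      have h1 : Relation.TransGen (votes i0) b a :=
        Relation.TransGen.mono (fun x y h => hR0 x y (hRsub x y h)) _ _ hT
      rw [(haveI : IsTrans A (votes i0) := ⟨fun _ _ _ h h' => htr h h'⟩; Relation.transGen_eq_self)] at h1
      exact hirr a (htr (hR0 a b hab) h1)
    rw [List.foldl_cons]
    rcases List.mem_cons.mp hmem with heq | hmem'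
    · subst heq
      have hacc : rpStep R (u, v) u v := by
        rw [rpStep, if_neg (hnoblock u v huv)]
        exact Or.inr ⟨rfl, rfl⟩
      exact foldl_rpStep_le t _ u v hacc
    · have hwe : voteWeight votes e.1 e.2 = n := by
        have h1 := hhead (u, v) hmem'
        simp only at h1
        exact le_antisymm (hle _ _) (huv.symm.trans_le h1)
      refine ih (rpStep R e) ?_ hst u v hmem' huv
      intro a b hab
      rw [rpStep] at hab
      split at hab
      · exact hRsub a b hab
      · rcases hab with h | ⟨h1, h2⟩
        · exact hRsub a b h
        · subst h1; subst h2; exact hwe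

/-- Proposition 1: if all `n` voters agree on the relative order `σ` of the
elements of `S`, then (i) every `σ`-consistent edge inside `S` has weight `n`,
(ii) the weight-`n` edges form an acyclic subgraph, and (iii) ranked pairs,
processing the edges in nonincreasing order of weight, outputs an ordering
that agrees with `σ` on `S`. -/
theorem stmt_8 {A : Type*} [Fintype A] {n : ℕ} (hn : 0 < n)
    (votes : Fin n → A → A → Prop)
    (hlin : ∀ i, IsStrictTotalOrder A (votes i))
    (S : Set A) (σ : A → A → Prop)
    (hσtot : ∀ u ∈ S, ∀ v ∈ S, u ≠ v → σ u v ∨ σ v u)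
    (hσirr : ∀ u, ¬ σ u u)
    (hunan : ∀ u ∈ S, ∀ v ∈ S, (σ u v ↔ ∀ i, votes i u v))
    (l : List (A × A))
    (hcomplete : ∀ u v : A, u ≠ v → (u, v) ∈ l)
    (hsorted : l.Pairwise (fun e e' => voteWeight votes e'.1 e'.2 ≤
      voteWeight votes e.1 e.2)) :
    (∀ u ∈ S, ∀ v ∈ S, σ u v → voteWeight votes u v = n) ∧
    (∀ x : A, ¬ Relation.TransGen (fun a b => voteWeight votes a b = n) x x) ∧
    (∀ u ∈ S, ∀ v ∈ S, σ u v → Relation.TransGen (rpAccepted l) u v) := by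
  classical
  have i0 : Fin n := ⟨0, hn⟩
  have hwle : ∀ u v : A, voteWeight votes u v ≤ n := by
    intro u v
    simpa [voteWeight, ← Nat.card_eq_fintype_card, natcard_fin] using
      Fintype.card_subtype_le (fun i => votes i u v)
  have hwn : ∀ u v : A, voteWeight votes u v = n ↔ ∀ i, votes i u v := by
    intro u v
    constructor
    · intro h i
      by_contra hi
      have hlt : voteWeight votes u v < n := by
        simpa [voteWeight, ← Nat.card_eq_fintype_card, natcard_fin] using
          Fintype.card_subtype_lt (p := fun j => votes j u v) (x := i) hi
      omega
    · intro h
      rw [voteWeight]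
      simpa [← Nat.card_eq_fintype_card, natcard_fin] using
        Fintype.card_congr (Equiv.subtypeUnivEquiv h)
  have htr : Transitive (votes i0) := fun _ _ _ h h' => (hlin i0).trans _ _ _ h h'
  have hirr : ∀ x, ¬ votes i0 x x := (hlin i0).irrefl
  have hR0 : ∀ a b : A, voteWeight votes a b = n → votes i0 a b :=
    fun a b h => (hwn a b).1 h i0
  have part1 : ∀ u ∈ S, ∀ v ∈ S, σ u v → voteWeight votes u v = n := by
    intro u hu v hv hσ
    exact (hwn u v).2 ((hunan u hu v hv).1 hσ)
  refine ⟨part1, ?_, ?_⟩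
  · intro x hx
    have h1 : Relation.TransGen (votes i0) x x := Relation.TransGen.mono hR0 _ _ hx
    rw [(haveI : IsTrans A (votes i0) := ⟨fun _ _ _ h h' => htr h h'⟩; Relation.transGen_eq_self)] at h1
    exact hirr x h1
  · intro u hu v hv hσ
    have hne : u ≠ v := by rintro rfl; exact hσirr u hσ
    have hw := part1 u hu v hv hσ
    exact Relation.TransGen.single
      (foldl_rpStep_accepts votes i0 htr hirr hR0 hwle l _
        (fun a b h => h.elim) hsorted u v (hcomplete u v hne) hw)
end
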